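/- Let t ∈ [0,1). For every bounded complex sequence y, the series (Ty)_i := ∑_{k=i}^∞ (t^{k−i}/(k+1)) y_k converges absolutely for each i ∈ ℕ₀, the resulting sequence Ty is bounded with sup_i |(Ty)_i| ≤ (1/(1−t)) sup_k |y_k| (so T is a bounded operator on ℓ^∞ with ‖T‖ ≤ 1/(1−t)), and for every x ∈ ℓ¹ one has the duality identity ∑_{n=0}^∞ (C_t x)_n y_n = ∑_{n=0}^∞ x_n (Ty)_n; that is, T is the dual operator C'_t of C_t : ℓ¹ → ℓ¹. -/

import Mathlib

/-- The generalized Cesàro operator `C_t` acting on complex sequences: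
`(C_t x)_n = (1/(n+1)) ∑_{i=0}^n t^{n-i} x_i`. -/
noncomputable def genCesaro (t : ℝ) (x : ℕ → ℂ) : ℕ → ℂ :=
  fun n => (1 / ((n : ℂ) + 1)) * ∑ i ∈ Finset.range (n + 1), (t : ℂ) ^ (n - i) * x i

/-- The transposed generalized Cesàro operator:
`(C'_t y)_i = ∑_{k=i}^∞ (t^{k-i}/(k+1)) y_k`. -/
noncomputable def genCesaroDual (t : ℝ) (y : ℕ → ℂ) : ℕ → ℂ :=
  fun i => ∑' k : ℕ, if i ≤ k then ((t : ℂ) ^ (k - i) / ((k : ℂ) + 1)) * y k else 0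

private lemma geom_shift_summable {t : ℝ} (ht0 : 0 ≤ t) (ht1 : t < 1) (i : ℕ) :
    Summable (fun k : ℕ => if i ≤ k then t ^ (k - i) else 0) := by
  rw [← summable_nat_add_iff i]
  have h : (fun n : ℕ => if i ≤ n + i then t ^ (n + i - i) else 0) = fun n => t ^ n := by
    funext n; simp [Nat.le_add_left, Nat.add_sub_cancel]
  rw [h]
  exact summable_geometric_of_lt_one ht0 ht1

private lemma geom_shift_tsum {t : ℝ} (ht0 : 0 ≤ t) (ht1 : t < 1) (i : ℕ) :
    ∑' k : ℕ, (if i ≤ k then t ^ (k - i) else 0) = (1 - t)⁻¹ := by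
  have h := Summable.sum_add_tsum_nat_add (f := fun k : ℕ => if i ≤ k then t ^ (k - i) else 0) i
    (geom_shift_summable ht0 ht1 i)
  have h1 : ∑ k ∈ Finset.range i, (if i ≤ k then t ^ (k - i) else 0) = 0 := by
    apply Finset.sum_eq_zero
    intro k hk
    rw [Finset.mem_range] at hk
    simp [Nat.not_le.mpr hk]
  have h2 : (fun n : ℕ => if i ≤ n + i then t ^ (n + i - i) else 0) = fun n => t ^ n := by
    funext n; simp [Nat.le_add_left, Nat.add_sub_cancel]
  rw [h1, zero_add, h2] at h
  rw [← h, tsum_geometric_of_lt_one ht0 ht1]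

private lemma abs_term_le {t : ℝ} (ht0 : 0 ≤ t) {M : ℝ} {y : ℕ → ℂ}
    (hM : ∀ k, ‖y k‖ ≤ M) (i k : ℕ) :
    ‖((t : ℂ) ^ (k - i) / ((k : ℂ) + 1)) * y k‖ ≤ t ^ (k - i) * M := by
  have hM0 : 0 ≤ M := le_trans (norm_nonneg _) (hM 0)
  have hk1 : ‖(k : ℂ) + 1‖ = (k : ℝ) + 1 := by
    rw [show ((k : ℂ) + 1) = ((k + 1 : ℕ) : ℂ) by push_cast; ring, Complex.norm_natCast]
    push_cast; ring
  rw [norm_mul, norm_div, norm_pow, Complex.norm_real, Real.norm_of_nonneg ht0, hk1]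
  have h1 : t ^ (k - i) / ((k : ℝ) + 1) ≤ t ^ (k - i) := by
    apply div_le_self (pow_nonneg ht0 _)
    have : (0 : ℝ) ≤ (k : ℝ) := Nat.cast_nonneg k
    linarith
  exact mul_le_mul h1 (hM k) (norm_nonneg _) (pow_nonneg ht0 _)

theorem genCesaroDual_bounded_and_duality (t : ℝ) (ht : t ∈ Set.Ico (0 : ℝ) 1)
    (y : ℕ → ℂ) (hy : ∃ M : ℝ, ∀ k, ‖y k‖ ≤ M) :
    (∀ i : ℕ, Summable (fun k : ℕ =>
      if i ≤ k then ‖((t : ℂ) ^ (k - i) / ((k : ℂ) + 1)) * y k‖ else 0)) ∧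
    ((⨆ i : ℕ, ‖genCesaroDual t y i‖) ≤
      (1 / (1 - t)) * (⨆ k : ℕ, ‖y k‖)) ∧
    (∀ x : ℕ → ℂ, Summable (fun n => ‖x n‖) →
      ∑' n : ℕ, genCesaro t x n * y n = ∑' n : ℕ, x n * genCesaroDual t y n) := by
  obtain ⟨ht0, ht1⟩ := ht
  obtain ⟨M, hM⟩ := hy
  have hM0 : 0 ≤ M := le_trans (norm_nonneg _) (hM 0)
  -- Part 1: summability of absolute values
  have part1 : ∀ i : ℕ, Summable (fun k : ℕ =>
      if i ≤ k then ‖((t : ℂ) ^ (k - i) / ((k : ℂ) + 1)) * y k‖ else 0) := by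
    intro i
    apply Summable.of_nonneg_of_le
    · intro k; positivity
    · intro k
      show (if i ≤ k then _ else (0:ℝ)) ≤ (if i ≤ k then t ^ (k - i) else 0) * M
      by_cases h : i ≤ k
      · simp only [if_pos h]; exact abs_term_le ht0 hM i k
      · simp [h]
    · exact (geom_shift_summable ht0 ht1 i).mul_right M
  refine ⟨part1, ?_, ?_⟩
  -- Part 2: sup bound
  · have hBdd : BddAbove (Set.range fun k => ‖y k‖) := ⟨M, by rintro _ ⟨k, rfl⟩; exact hM k⟩
    set S := ⨆ k : ℕ, ‖y k‖ with hS
    have hyS : ∀ k, ‖y k‖ ≤ S := fun k => le_ciSup hBdd k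
    have hS0 : 0 ≤ S := le_trans (norm_nonneg _) (hyS 0)
    apply ciSup_le
    intro i
    have hsum := part1 i
    have hnorm_eq : (fun k : ℕ => ‖if i ≤ k then ((t : ℂ) ^ (k - i) / ((k : ℂ) + 1)) * y k else 0‖)
        = fun k : ℕ => if i ≤ k then ‖((t : ℂ) ^ (k - i) / ((k : ℂ) + 1)) * y k‖ else 0 := by
      funext k; rw [apply_ite norm]; simp
    have h1 : ‖genCesaroDual t y i‖ ≤
        ∑' k : ℕ, (if i ≤ k then ‖((t : ℂ) ^ (k - i) / ((k : ℂ) + 1)) * y k‖ else 0) := by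
      rw [genCesaroDual]
      calc ‖∑' k : ℕ, if i ≤ k then ((t : ℂ) ^ (k - i) / ((k : ℂ) + 1)) * y k else 0‖
          ≤ ∑' k : ℕ, ‖if i ≤ k then ((t : ℂ) ^ (k - i) / ((k : ℂ) + 1)) * y k else 0‖ :=
            norm_tsum_le_tsum_norm (by rw [hnorm_eq]; exact hsum)
        _ = _ := by rw [hnorm_eq]
    refine le_trans h1 ?_
    have h2 : ∑' k : ℕ, (if i ≤ k then ‖((t : ℂ) ^ (k - i) / ((k : ℂ) + 1)) * y k‖ else 0)
        ≤ ∑' k : ℕ, (if i ≤ k then t ^ (k - i) else 0) * S := by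
      apply Summable.tsum_le_tsum _ hsum ((geom_shift_summable ht0 ht1 i).mul_right S)
      intro k
      by_cases h : i ≤ k
      · simp only [if_pos h]
        exact le_trans (abs_term_le ht0 hyS i k) le_rfl
      · simp [h]
    refine le_trans h2 ?_
    rw [tsum_mul_right, geom_shift_tsum ht0 ht1 i, one_div]
  -- Part 3: duality
  · intro x hx
    -- the two-variable kernel
    set F : ℕ → ℕ → ℂ := fun i k =>
      if i ≤ k then ((t : ℂ) ^ (k - i) / ((k : ℂ) + 1)) * x i * y k else 0 with hF
    have hFnorm : ∀ i k, ‖F i k‖ ≤ (if i ≤ k then t ^ (k - i) else 0) * (‖x i‖ * M) := by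
      intro i k
      by_cases h : i ≤ k
      · simp only [hF, if_pos h]
        rw [norm_mul, norm_mul]
        calc ‖(t:ℂ)^(k-i) / ((k:ℂ)+1)‖ * ‖x i‖ * ‖y k‖
            = ‖(t:ℂ)^(k-i) / ((k:ℂ)+1) * y k‖ * ‖x i‖ := by
              rw [norm_mul]; ring
          _ ≤ (t ^ (k - i) * M) * ‖x i‖ :=
              mul_le_mul_of_nonneg_right (abs_term_le ht0 hM i k) (norm_nonneg _)
          _ = t ^ (k - i) * (‖x i‖ * M) := by ring
      · simp [hF, h]
    -- summability of the uncurried kernel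
    have htsum_eq : ∀ i : ℕ, ∑' k : ℕ, (if i ≤ k then t ^ (k - i) else 0) *
        (‖x i‖ * M) = (1 - t)⁻¹ * (‖x i‖ * M) := by
      intro i
      rw [tsum_mul_right, geom_shift_tsum ht0 ht1 i]
    set G : ℕ × ℕ → ℝ := fun p => (if p.1 ≤ p.2 then t ^ (p.2 - p.1) else 0) *
        (‖x p.1‖ * M) with hGdef
    have hGpos : 0 ≤ G := by
      intro p
      have h0 : (0:ℝ) ≤ if p.1 ≤ p.2 then t ^ (p.2 - p.1) else 0 := by positivity
      exact mul_nonneg h0 (mul_nonneg (norm_nonneg _) hM0)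
    have hGslice : ∀ i : ℕ, Summable fun k => G (i, k) := by
      intro i
      simp only [hGdef]
      exact (geom_shift_summable ht0 ht1 i).mul_right _
    have hGsums : Summable fun i : ℕ => ∑' k, G (i, k) := by
      have heq : (fun i : ℕ => ∑' k : ℕ, G (i, k))
          = fun i => (1 - t)⁻¹ * (‖x i‖ * M) := by
        funext i
        simp only [hGdef]
        exact htsum_eq i
      rw [heq]
      exact ((hx.mul_right M).mul_left _)
    have hG : Summable G := (summable_prod_of_nonneg hGpos).2 ⟨hGslice, hGsums⟩
    have hFsum : Summable (Function.uncurry F) := by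
      apply Summable.of_norm
      apply Summable.of_nonneg_of_le (fun p => norm_nonneg _) _ hG
      intro p
      exact hFnorm p.1 p.2
    have hFi : ∀ i, Summable (F i) := by
      intro i
      apply Summable.of_norm
      apply Summable.of_nonneg_of_le (fun k => norm_nonneg _) (fun k => hFnorm i k)
        ((geom_shift_summable ht0 ht1 i).mul_right _)
    have hFk : ∀ k, Summable (fun i => F i k) := by
      intro k
      apply summable_of_ne_finset_zero (s := Finset.range (k + 1))
      intro i hi
      rw [Finset.mem_range, not_lt] at hi
      simp [hF, Nat.not_le.mpr (Nat.lt_of_succ_le (Nat.succ_le_of_lt (Nat.lt_of_succ_le hi)))]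
    -- Fubini
    have hcomm : ∑' k, ∑' i, F i k = ∑' i, ∑' k, F i k :=
      Summable.tsum_comm' hFsum hFi hFk
    -- LHS: inner sum over i is finite
    have hL : ∀ k : ℕ, ∑' i, F i k = genCesaro t x k * y k := by
      intro k
      rw [tsum_eq_sum (s := Finset.range (k + 1))]
      · rw [genCesaro]
        rw [Finset.mul_sum, Finset.sum_mul]
        apply Finset.sum_congr rfl
        intro i hi
        rw [Finset.mem_range] at hi
        have h : i ≤ k := Nat.lt_succ_iff.mp hi
        simp only [hF, if_pos h]
        field_simp
      · intro i hi
        rw [Finset.mem_range, not_lt] at hi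
        have : ¬ i ≤ k := by omega
        simp [hF, this]
    have hR : ∀ i : ℕ, ∑' k, F i k = x i * genCesaroDual t y i := by
      intro i
      rw [genCesaroDual, ← tsum_mul_left]
      congr 1
      funext k
      by_cases h : i ≤ k
      · simp only [hF, if_pos h]; ring
      · simp [hF, h]
    calc ∑' n : ℕ, genCesaro t x n * y n = ∑' k, ∑' i, F i k := by
          congr 1; funext k; exact (hL k).symm
      _ = ∑' i, ∑' k, F i k := hcomm
      _ = ∑' n : ℕ, x n * genCesaroDual t y n := by
          congr 1; funext i; exact hR i
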